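/- Let g : ℝⁿ → ℝ ∪ {+∞} be proper lower semicontinuous, f : ℝⁿ → ℝ continuously differentiable, and (xᵏ) a sequence with xᵏ ∈ argmin_y { ⟨∇f(x^{k-1}), y⟩ + (αγₖ/2)‖y - x^{k-1}‖² + g(y) } for a bounded sequence (γₖ) with γₖ ≥ L₀ > 0 and α > 0. If ‖xᵏ - x^{k-1}‖ → 0, a subsequence x^{k} → x* (k ∈ K), and F(xᵏ) = f(xᵏ) + g(xᵏ) converges, then 0 ∈ ∂F(x*) (limiting subdifferential), i.e., x* is an l-stationary point. -/

import Mathlib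

open Filter Topology
open scoped RealInnerProductSpace

/-- Fréchet subdifferential of an extended-real-valued function on ℝⁿ. -/
def frechetSubdiff {n : ℕ} (F : EuclideanSpace ℝ (Fin n) → EReal)
    (x : EuclideanSpace ℝ (Fin n)) : Set (EuclideanSpace ℝ (Fin n)) :=
  {ξ | F x ≠ ⊤ ∧ F x ≠ ⊥ ∧ ∀ ε : ℝ, 0 < ε → ∀ᶠ y in 𝓝 x,
    F x + ((⟪ξ, y - x⟫ - ε * ‖y - x‖ : ℝ) : EReal) ≤ F y}

/-- Limiting (Mordukhovich) subdifferential. -/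
def limitingSubdiff {n : ℕ} (F : EuclideanSpace ℝ (Fin n) → EReal)
    (x : EuclideanSpace ℝ (Fin n)) : Set (EuclideanSpace ℝ (Fin n)) :=
  {ξ | ∃ xs : ℕ → EuclideanSpace ℝ (Fin n), ∃ ξs : ℕ → EuclideanSpace ℝ (Fin n),
    Tendsto xs atTop (𝓝 x) ∧ Tendsto (fun m => F (xs m)) atTop (𝓝 (F x)) ∧
    Tendsto ξs atTop (𝓝 ξ) ∧ ∀ m, ξs m ∈ frechetSubdiff F (xs m)}

set_option maxHeartbeats 2000000 in
theorem stmt17 {n : ℕ} (f : EuclideanSpace ℝ (Fin n) → ℝ)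
    (g : EuclideanSpace ℝ (Fin n) → EReal)
    (hf : ContDiff ℝ 1 f)
    (hg_lsc : LowerSemicontinuous g)
    (hg_ne_bot : ∀ z, g z ≠ ⊥) (hg_proper : ∃ z, g z ≠ ⊤)
    (α L₀ : ℝ) (hα : 0 < α) (hL₀ : 0 < L₀)
    (γ : ℕ → ℝ) (hγlb : ∀ k, L₀ ≤ γ k) (hγbd : ∃ B : ℝ, ∀ k, γ k ≤ B)
    (x : ℕ → EuclideanSpace ℝ (Fin n))
    (hargmin : ∀ k, 1 ≤ k → ∀ y,
      ((⟪gradient f (x (k - 1)), x k⟫ +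
          α * γ k / 2 * ‖x k - x (k - 1)‖ ^ 2 : ℝ) : EReal) + g (x k) ≤
        ((⟪gradient f (x (k - 1)), y⟫ +
          α * γ k / 2 * ‖y - x (k - 1)‖ ^ 2 : ℝ) : EReal) + g y)
    (hstep : Tendsto (fun k => ‖x k - x (k - 1)‖) atTop (𝓝 0))
    (xstar : EuclideanSpace ℝ (Fin n)) (φ : ℕ → ℕ) (hφ : StrictMono φ)
    (hsub : Tendsto (fun m => x (φ m)) atTop (𝓝 xstar))
    (hFconv : ∃ c : EReal,
      Tendsto (fun k => ((f (x k) : EReal) + g (x k))) atTop (𝓝 c)) :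
    (0 : EuclideanSpace ℝ (Fin n)) ∈
      limitingSubdiff (fun y => ((f y : EReal) + g y)) xstar := by
  classical
  obtain ⟨B, hB⟩ := hγbd
  obtain ⟨z₀, hz₀⟩ := hg_proper
  have hBpos : 0 < B := lt_of_lt_of_le hL₀ ((hγlb 0).trans (hB 0))
  set F : EuclideanSpace ℝ (Fin n) → EReal := fun y => ((f y : EReal) + g y) with hFdef
  have hgradcont : Continuous (gradient f) := by
    have h1 : Continuous (fderiv ℝ f) := hf.continuous_fderiv one_ne_zero
    exact (InnerProductSpace.toDual ℝ
      (EuclideanSpace ℝ (Fin n))).symm.continuous.comp h1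
  have hdiff : ∀ z, HasGradientAt f (gradient f z) z := fun z =>
    ((hf.differentiable one_ne_zero) z).hasGradientAt
  have hfc : Continuous f := hf.continuous
  -- finiteness of g along the sequence
  have hgfin : ∀ k, 1 ≤ k → g (x k) ≠ ⊤ := by
    intro k hk hcon
    have h := hargmin k hk z₀
    rw [hcon, EReal.add_top_of_ne_bot (EReal.coe_ne_bot _)] at h
    have hlt : ((⟪gradient f (x (k - 1)), z₀⟫ +
        α * γ k / 2 * ‖z₀ - x (k - 1)‖ ^ 2 : ℝ) : EReal) + g z₀ < ⊤ := by
      rw [← EReal.coe_toReal hz₀ (hg_ne_bot z₀), ← EReal.coe_add]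
      exact EReal.coe_lt_top _
    exact absurd h (not_le.mpr hlt)
  -- real-valued form of the argmin inequality
  have hargR : ∀ k, 1 ≤ k → ∀ y, g y ≠ ⊤ →
      ⟪gradient f (x (k - 1)), x k⟫ + α * γ k / 2 * ‖x k - x (k - 1)‖ ^ 2
        + (g (x k)).toReal ≤
      ⟪gradient f (x (k - 1)), y⟫ + α * γ k / 2 * ‖y - x (k - 1)‖ ^ 2
        + (g y).toReal := by
    intro k hk y hy
    have h := hargmin k hk y
    rw [← EReal.coe_toReal (hgfin k hk) (hg_ne_bot _),
      ← EReal.coe_toReal hy (hg_ne_bot _)] at h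
    exact_mod_cast h
  -- Fréchet subdifferential membership
  have hξmem : ∀ k, 1 ≤ k →
      (gradient f (x k) - gradient f (x (k - 1))
        + (α * γ k) • (x (k - 1) - x k)) ∈ frechetSubdiff F (x k) := by
    intro k hk
    have hgk : g (x k) = (((g (x k)).toReal : ℝ) : EReal) :=
      (EReal.coe_toReal (hgfin k hk) (hg_ne_bot _)).symm
    have hFk : F (x k) = ((f (x k) + (g (x k)).toReal : ℝ) : EReal) := by
      simp only [hFdef]
      conv_lhs => rw [hgk]
      rw [← EReal.coe_add]
    refine ⟨by rw [hFk]; exact EReal.coe_ne_top _,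
            by rw [hFk]; exact EReal.coe_ne_bot _, ?_⟩
    intro ε hε
    set p := gradient f (x (k - 1)) with hp
    set q := gradient f (x k) with hq
    set c := α * γ k / 2 with hc
    have hcpos : 0 < c := by
      have := (hγlb k).trans_lt' hL₀
      positivity
    -- little-o estimate for f
    have h1 : ∀ᶠ y in 𝓝 (x k),
        |f y - f (x k) - ⟪q, y - x k⟫| ≤ ε / 2 * ‖y - x k‖ := by
      have hlo := ((hdiff (x k)).hasFDerivAt).isLittleO
      have := hlo.def (half_pos hε)
      filter_upwards [this] with y hy
      have hq' : ∀ v, ⟪q, v⟫ = fderiv ℝ f (x k) v := fun v => by rw [hq, inner_gradient_left]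
      simpa [Real.norm_eq_abs, hq', map_sub] using hy
    -- quadratic estimate
    have h2 : ∀ᶠ y in 𝓝 (x k), c * ‖y - x k‖ ^ 2 ≤ ε / 2 * ‖y - x k‖ := by
      have hδ : (0:ℝ) < ε / (2 * c) := by positivity
      have hball : Metric.ball (x k) (ε / (2 * c)) ∈ 𝓝 (x k) :=
        Metric.ball_mem_nhds _ hδ
      filter_upwards [hball] with y hy
      have hd : ‖y - x k‖ < ε / (2 * c) := by
        rw [← dist_eq_norm]; exact hy
      have hnn : (0:ℝ) ≤ ‖y - x k‖ := norm_nonneg _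
      have h4 : c * (ε / (2 * c)) = ε / 2 := by field_simp
      have h5 : c * ‖y - x k‖ ≤ ε / 2 := by
        rw [← h4]; exact mul_le_mul_of_nonneg_left hd.le hcpos.le
      nlinarith [mul_le_mul_of_nonneg_right h5 hnn]
    filter_upwards [h1, h2] with y hy1 hy2
    by_cases hgy : g y = ⊤
    · have : F y = ⊤ := by
        simp only [hFdef]; rw [hgy, EReal.add_top_of_ne_bot (EReal.coe_ne_bot _)]
      rw [this]; exact le_top
    · have hgye : g y = (((g y).toReal : ℝ) : EReal) :=
        (EReal.coe_toReal hgy (hg_ne_bot _)).symm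
      have hFy : F y = ((f y + (g y).toReal : ℝ) : EReal) := by
        simp only [hFdef]
        conv_lhs => rw [hgye]
        rw [← EReal.coe_add]
      rw [hFk, hFy, ← EReal.coe_add, EReal.coe_le_coe_iff]
      -- real inequality
      have hA := hargR k hk y hgy
      have habs := abs_le.mp hy1
      have hni : ‖y - x (k-1)‖ ^ 2 = ‖y - x k‖ ^ 2
          + 2 * ⟪y - x k, x k - x (k-1)⟫ + ‖x k - x (k-1)‖ ^ 2 := by
        have h3 := norm_add_sq_real (y - x k) (x k - x (k-1))
        rwa [sub_add_sub_cancel] at h3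
      have hξ : ⟪q - p + (α * γ k) • (x (k-1) - x k), y - x k⟫
          = ⟪q, y - x k⟫ - ⟪p, y - x k⟫
            - (2 * c) * ⟪y - x k, x k - x (k-1)⟫ := by
        rw [inner_add_left, inner_sub_left, real_inner_smul_left, hc]
        rw [show (x (k-1) - x k : EuclideanSpace ℝ (Fin n)) = -(x k - x (k-1)) by abel,
          inner_neg_left, real_inner_comm (x k - x (k-1)) (y - x k)]
        ring
      have hpy : ⟪p, y⟫ - ⟪p, x k⟫ = ⟪p, y - x k⟫ := (inner_sub_right p y (x k)).symm
      rw [hξ]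
      nlinarith [hA, habs.1, habs.2, hy2, hni, hpy]
  -- the subsequence indices
  set ks : ℕ → ℕ := fun m => φ (m + 1) with hks
  have hks1 : ∀ m, 1 ≤ ks m := fun m => le_trans (Nat.succ_le_succ (Nat.zero_le m)) (hφ.le_apply)
  have hkstop : Tendsto ks atTop atTop :=
    hφ.tendsto_atTop.comp (tendsto_add_atTop_nat 1)
  have hxs : Tendsto (fun m => x (ks m)) atTop (𝓝 xstar) :=
    hsub.comp (tendsto_add_atTop_nat 1)
  have hstep' : Tendsto (fun m => ‖x (ks m) - x (ks m - 1)‖) atTop (𝓝 0) :=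
    hstep.comp hkstop
  have hdiff0 : Tendsto (fun m => x (ks m) - x (ks m - 1)) atTop (𝓝 0) := by
    rw [tendsto_zero_iff_norm_tendsto_zero]; exact hstep'
  have hprev : Tendsto (fun m => x (ks m - 1)) atTop (𝓝 xstar) := by
    have heq : (fun m => x (ks m - 1))
        = fun m => x (ks m) - (x (ks m) - x (ks m - 1)) := by
      funext m; abel
    rw [heq]
    simpa using hxs.sub hdiff0
  have hgradk : Tendsto (fun m => gradient f (x (ks m))) atTop
      (𝓝 (gradient f xstar)) := (hgradcont.tendsto _).comp hxs
  have hgradprev : Tendsto (fun m => gradient f (x (ks m - 1))) atTop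
      (𝓝 (gradient f xstar)) := (hgradcont.tendsto _).comp hprev
  -- ξ sequence tends to 0
  set ξs : ℕ → EuclideanSpace ℝ (Fin n) := fun m =>
    gradient f (x (ks m)) - gradient f (x (ks m - 1))
      + (α * γ (ks m)) • (x (ks m - 1) - x (ks m)) with hξs
  have hξto0 : Tendsto ξs atTop (𝓝 0) := by
    have part1 : Tendsto (fun m => gradient f (x (ks m)) - gradient f (x (ks m - 1)))
        atTop (𝓝 0) := by simpa using hgradk.sub hgradprev
    have part2 : Tendsto (fun m => (α * γ (ks m)) • (x (ks m - 1) - x (ks m)))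
        atTop (𝓝 0) := by
      apply squeeze_zero_norm (a := fun m => α * B * ‖x (ks m) - x (ks m - 1)‖)
      · intro m
        rw [norm_smul, Real.norm_eq_abs, norm_sub_rev]
        have hγpos : 0 < γ (ks m) := hL₀.trans_le (hγlb _)
        rw [abs_of_pos (by positivity)]
        have := mul_le_mul_of_nonneg_left (hB (ks m)) hα.le
        exact mul_le_mul_of_nonneg_right this (norm_nonneg _)
      · simpa using hstep'.const_mul (α * B)
    simpa using part1.add part2
  -- g tends to g xstar along the subsequence
  have hgy : Tendsto (fun m => g (x (ks m))) atTop (𝓝 (g xstar)) := by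
    refine tendsto_of_le_liminf_of_limsup_le ?_ ?_
      (isBounded_le_of_top) (isBounded_ge_of_bot)
    · rw [le_liminf_iff]
      intro b hb
      exact hxs.eventually (hg_lsc xstar b hb)
    · by_cases htop : g xstar = ⊤
      · rw [htop]; exact le_top
      · set r : ℝ := (g xstar).toReal with hr
        have hgx : g xstar = (r : EReal) :=
          (EReal.coe_toReal htop (hg_ne_bot _)).symm
        set δ : ℕ → ℝ := fun m =>
          (⟪gradient f (x (ks m - 1)), xstar⟫
            + α * γ (ks m) / 2 * ‖xstar - x (ks m - 1)‖ ^ 2)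
          - (⟪gradient f (x (ks m - 1)), x (ks m)⟫
            + α * γ (ks m) / 2 * ‖x (ks m) - x (ks m - 1)‖ ^ 2) with hδdef
        have key : ∀ m, g (x (ks m)) ≤ ((r + δ m : ℝ) : EReal) := by
          intro m
          have h := hargR (ks m) (hks1 m) xstar (by rw [hgx]; exact EReal.coe_ne_top _)
          conv_lhs => rw [(EReal.coe_toReal (hgfin (ks m) (hks1 m)) (hg_ne_bot _)).symm]
          rw [EReal.coe_le_coe_iff]
          have hrr : (g xstar).toReal = r := rfl
          rw [hrr] at h
          simp only [hδdef]
          linarith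
        have hδ0 : Tendsto δ atTop (𝓝 0) := by
          have heq : δ = fun m =>
              ⟪gradient f (x (ks m - 1)), xstar - x (ks m)⟫
              + α * γ (ks m) / 2 *
                (‖xstar - x (ks m - 1)‖ ^ 2 - ‖x (ks m) - x (ks m - 1)‖ ^ 2) := by
            funext m
            simp only [hδdef, inner_sub_right]
            ring
          rw [heq]
          have t1 : Tendsto (fun m =>
              ⟪gradient f (x (ks m - 1)), xstar - x (ks m)⟫) atTop (𝓝 0) := by
            have hz : Tendsto (fun m => xstar - x (ks m)) atTop (𝓝 0) := by
              simpa using (tendsto_const_nhds (x := xstar)).sub hxs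
            simpa using hgradprev.inner (𝕜 := ℝ) hz
          have t2 : Tendsto (fun m => α * γ (ks m) / 2 *
              (‖xstar - x (ks m - 1)‖ ^ 2 - ‖x (ks m) - x (ks m - 1)‖ ^ 2))
              atTop (𝓝 0) := by
            have hu : Tendsto (fun m =>
                ‖xstar - x (ks m - 1)‖ ^ 2 - ‖x (ks m) - x (ks m - 1)‖ ^ 2)
                atTop (𝓝 0) := by
              have ha : Tendsto (fun m => ‖xstar - x (ks m - 1)‖) atTop (𝓝 0) := by
                rw [← tendsto_zero_iff_norm_tendsto_zero]
                simpa using (tendsto_const_nhds (x := xstar)).sub hprev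
              have ha2 : Tendsto (fun m => ‖xstar - x (ks m - 1)‖ ^ 2) atTop (𝓝 0) := by
                simpa using ha.pow 2
              have hb2 : Tendsto (fun m => ‖x (ks m) - x (ks m - 1)‖ ^ 2) atTop (𝓝 0) := by
                simpa using hstep'.pow 2
              simpa using ha2.sub hb2
            apply squeeze_zero_norm (a := fun m => α * B / 2 *
                ‖‖xstar - x (ks m - 1)‖ ^ 2 - ‖x (ks m) - x (ks m - 1)‖ ^ 2‖)
            · intro m
              rw [norm_mul, Real.norm_eq_abs (α * γ (ks m) / 2)]
              have hγpos : 0 < γ (ks m) := hL₀.trans_le (hγlb _)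
              rw [abs_of_pos (by positivity)]
              apply mul_le_mul_of_nonneg_right _ (norm_nonneg _)
              have := hB (ks m)
              nlinarith
            · have : Tendsto (fun m =>
                  ‖‖xstar - x (ks m - 1)‖ ^ 2 - ‖x (ks m) - x (ks m - 1)‖ ^ 2‖)
                  atTop (𝓝 0) := by
                simpa using hu.norm
              simpa using this.const_mul (α * B / 2)
          simpa using t1.add t2
        calc limsup (fun m => g (x (ks m))) atTop
            ≤ limsup (fun m => ((r + δ m : ℝ) : EReal)) atTop :=
              limsup_le_limsup (Eventually.of_forall key)
          _ = ((r : ℝ) : EReal) := by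
              apply Tendsto.limsup_eq
              have : Tendsto (fun m => r + δ m) atTop (𝓝 r) := by
                simpa using (tendsto_const_nhds (x := r)).add hδ0
              exact (EReal.tendsto_coe).mpr this
          _ = g xstar := hgx.symm
  -- F tends to F xstar along the subsequence
  have hFlim : Tendsto (fun m => F (x (ks m))) atTop (𝓝 (F xstar)) := by
    have hfm : Tendsto (fun m => ((f (x (ks m)) : ℝ) : EReal)) atTop
        (𝓝 ((f xstar : ℝ) : EReal)) :=
      (EReal.tendsto_coe).mpr ((hfc.tendsto _).comp hxs)
    have hadd : ContinuousAt (fun p : EReal × EReal => p.1 + p.2)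
        (((f xstar : ℝ) : EReal), g xstar) :=
      EReal.continuousAt_add (Or.inl (EReal.coe_ne_top _)) (Or.inl (EReal.coe_ne_bot _))
    exact (hadd.tendsto).comp (hfm.prodMk_nhds hgy)
  exact ⟨fun m => x (ks m), ξs, hxs, hFlim, hξto0,
    fun m => hξmem (ks m) (hks1 m)⟩
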